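/- There exists a constant c > 0, independent of w, N₁ and N₂, such that for every continuously differentiable w : Ω̄ → ℝ with Ω = (0,1)², ‖w − 𝒞_h w‖_{L¹(Ω)} ≤ c h ∫_Ω |∇w(z)| dz, where h = max(h₁, h₂). -/

import Mathlib

open MeasureTheory Set
open scoped ENNReal NNReal

noncomputable section

/-- The open unit square `Ω = (0,1)²`. -/
def OmgO : Set (ℝ × ℝ) := Ioo (0 : ℝ) 1 ×ˢ Ioo (0 : ℝ) 1

/-- The closed unit square `Ω̄ = [0,1]²`. -/
def sqC : Set (ℝ × ℝ) := Icc (0 : ℝ) 1 ×ˢ Icc (0 : ℝ) 1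

/-- `f` coincides on `T` with a bilinear polynomial `a + b x¹ + c x² + d x¹x²`. -/
def IsBilinearOn (f : ℝ × ℝ → ℝ) (T : Set (ℝ × ℝ)) : Prop :=
  ∃ a b c d : ℝ, ∀ z ∈ T, f z = a + b * z.1 + c * z.2 + d * (z.1 * z.2)

/-- The cell `T_{k,l} = [k h₁,(k+1)h₁] × [l h₂,(l+1)h₂]`. -/
def cell (h₁ h₂ : ℝ) (k l : ℤ) : Set (ℝ × ℝ) :=
  Icc ((k : ℝ) * h₁) (((k : ℝ) + 1) * h₁) ×ˢ Icc ((l : ℝ) * h₂) (((l : ℝ) + 1) * h₂)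

/-- `Q = [-h₁/2, h₁/2] × [-h₂/2, h₂/2]`. -/
def Qset (h₁ h₂ : ℝ) : Set (ℝ × ℝ) :=
  Icc (-(h₁ / 2)) (h₁ / 2) ×ˢ Icc (-(h₂ / 2)) (h₂ / 2)

/-- The Euclidean norm of the gradient of `w`. -/
def gradNorm (w : ℝ × ℝ → ℝ) (z : ℝ × ℝ) : ℝ :=
  Real.sqrt ((fderiv ℝ w z (1, 0)) ^ 2 + (fderiv ℝ w z (0, 1)) ^ 2)

/-- `Q_Ω(k,l) = (z_{k,l} + Q) ∩ Ω`. -/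
def QOmg (h₁ h₂ : ℝ) (k l : ℤ) : Set (ℝ × ℝ) :=
  (Icc ((k : ℝ) * h₁ - h₁ / 2) ((k : ℝ) * h₁ + h₁ / 2) ×ˢ
    Icc ((l : ℝ) * h₂ - h₂ / 2) ((l : ℝ) * h₂ + h₂ / 2)) ∩ OmgO

/-- `Ch` is the boundary-corrected interpolant `𝒞_h w` on `Ω̄ = [0,1]²`:
continuous on `Ω̄`, bilinear on each cell, with nodal values equal to the average
of `w` over `Q_Ω(k,l)`. -/
def IsCInterp (N₁ N₂ : ℕ) (h₁ h₂ : ℝ) (w Ch : ℝ × ℝ → ℝ) : Prop :=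
  ContinuousOn Ch sqC ∧
    (∀ k l : ℕ, k < N₁ → l < N₂ → IsBilinearOn Ch (cell h₁ h₂ k l)) ∧
    ∀ k l : ℕ, k ≤ N₁ → l ≤ N₂ →
      Ch ((k : ℝ) * h₁, (l : ℝ) * h₂) =
        (volume (QOmg h₁ h₂ k l)).toReal⁻¹ * ∫ y in QOmg h₁ h₂ (k : ℤ) (l : ℤ), w y

lemma my_cs (a b c d : ℝ) : |a*c + b*d| ≤ Real.sqrt (a^2+b^2) * Real.sqrt (c^2+d^2) := by
  have h1 : |a*c+b*d| = Real.sqrt ((a*c+b*d)^2) := (Real.sqrt_sq_eq_abs _).symm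
  rw [h1, ← Real.sqrt_mul (by positivity)]
  exact Real.sqrt_le_sqrt (by nlinarith [sq_nonneg (a*d - b*c)])

lemma my_sqrt_le (x y : ℝ) : Real.sqrt (x^2 + y^2) ≤ |x| + |y| := by
  have h : x^2 + y^2 ≤ (|x|+|y|)^2 := by
    nlinarith [sq_abs x, sq_abs y, mul_nonneg (abs_nonneg x) (abs_nonneg y)]
  calc Real.sqrt (x^2+y^2) ≤ Real.sqrt ((|x|+|y|)^2) := Real.sqrt_le_sqrt h
    _ = |x|+|y| := Real.sqrt_sq (by positivity)

lemma OmgO_open : IsOpen OmgO := isOpen_Ioo.prod isOpen_Ioo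
lemma OmgO_sub : OmgO ⊆ sqC := prod_mono Ioo_subset_Icc_self Ioo_subset_Icc_self
lemma sqC_compact : IsCompact sqC := isCompact_Icc.prod isCompact_Icc
lemma sqC_ud : UniqueDiffOn ℝ sqC := (uniqueDiffOn_Icc one_pos).prod (uniqueDiffOn_Icc one_pos)
lemma OmgO_meas : MeasurableSet OmgO := OmgO_open.measurableSet
lemma OmgO_convex : Convex ℝ OmgO := (convex_Ioo _ _).prod (convex_Ioo _ _)

lemma diff_at (w : ℝ × ℝ → ℝ) (hw : ContDiffOn ℝ 1 w sqC) {p : ℝ × ℝ} (hp : p ∈ OmgO) :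
    DifferentiableAt ℝ w p := by
  have hn : sqC ∈ nhds p := mem_nhds_iff.2 ⟨OmgO, OmgO_sub, OmgO_open, hp⟩
  exact ((hw.differentiableOn one_ne_zero) p (OmgO_sub hp)).differentiableAt hn

lemma fderiv_eq_within (w : ℝ × ℝ → ℝ) {p : ℝ × ℝ} (hp : p ∈ OmgO) :
    fderivWithin ℝ w sqC p = fderiv ℝ w p := by
  have hn : sqC ∈ nhds p := mem_nhds_iff.2 ⟨OmgO, OmgO_sub, OmgO_open, hp⟩
  exact fderivWithin_of_mem_nhds hn

lemma fderiv_cont (w : ℝ × ℝ → ℝ) (hw : ContDiffOn ℝ 1 w sqC) :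
    ContinuousOn (fun p => fderiv ℝ w p) OmgO := by
  have hc := (hw.continuousOn_fderivWithin sqC_ud le_rfl).mono OmgO_sub
  exact hc.congr (fun p hp => (fderiv_eq_within w hp).symm)

lemma gradNorm_cont (w : ℝ × ℝ → ℝ) (hw : ContDiffOn ℝ 1 w sqC) :
    ContinuousOn (gradNorm w) OmgO := by
  have h1 : ContinuousOn (fun p => fderiv ℝ w p (1,0)) OmgO :=
    (fderiv_cont w hw).clm_apply continuousOn_const
  have h2 : ContinuousOn (fun p => fderiv ℝ w p (0,1)) OmgO :=
    (fderiv_cont w hw).clm_apply continuousOn_const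
  exact Real.continuous_sqrt.comp_continuousOn ((h1.pow 2).add (h2.pow 2))

lemma gradNorm_nonneg (w : ℝ × ℝ → ℝ) (z : ℝ × ℝ) : 0 ≤ gradNorm w z := Real.sqrt_nonneg _

lemma gradNorm_bound (w : ℝ × ℝ → ℝ) (hw : ContDiffOn ℝ 1 w sqC) :
    ∃ B : ℝ, 0 ≤ B ∧ ∀ p ∈ OmgO, gradNorm w p ≤ B := by
  obtain ⟨B, hB⟩ := sqC_compact.exists_bound_of_continuousOn
    (hw.continuousOn_fderivWithin sqC_ud le_rfl)
  refine ⟨2 * (|B| + 1), by positivity, fun p hp => ?_⟩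
  have hBp : ‖fderivWithin ℝ w sqC p‖ ≤ |B| := le_trans (hB p (OmgO_sub hp)) (le_abs_self B)
  have e1 : ‖((1,0) : ℝ × ℝ)‖ = 1 := by simp [Prod.norm_def]
  have e2 : ‖((0,1) : ℝ × ℝ)‖ = 1 := by simp [Prod.norm_def]
  have h2 : ‖fderiv ℝ w p‖ ≤ |B| := by rw [← fderiv_eq_within w hp]; exact hBp
  have b1 : |fderiv ℝ w p (1,0)| ≤ |B| + 1 := by
    have h := (fderiv ℝ w p).le_opNorm ((1,0) : ℝ × ℝ)
    rw [e1, mul_one, Real.norm_eq_abs] at h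
    linarith
  have b2 : |fderiv ℝ w p (0,1)| ≤ |B| + 1 := by
    have h := (fderiv ℝ w p).le_opNorm ((0,1) : ℝ × ℝ)
    rw [e2, mul_one, Real.norm_eq_abs] at h
    linarith
  calc gradNorm w p ≤ |fderiv ℝ w p (1,0)| + |fderiv ℝ w p (0,1)| := my_sqrt_le _ _
    _ ≤ 2 * (|B| + 1) := by linarith

lemma path_mem {z v : ℝ × ℝ} (hz : z ∈ OmgO) (hzv : z + v ∈ OmgO) {t : ℝ}
    (ht : t ∈ Icc (0:ℝ) 1) : z + t • v ∈ OmgO := by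
  have h : z + t • v = (1 - t) • z + t • (z + v) := by
    rw [smul_add, sub_smul, one_smul]; abel
  rw [h]
  exact OmgO_convex hz hzv (by linarith [ht.1, ht.2]) ht.1 (by ring)

lemma fderiv_apply_bound (w : ℝ × ℝ → ℝ) (hw : ContDiffOn ℝ 1 w sqC) {p : ℝ × ℝ}
    (hp : p ∈ OmgO) (v : ℝ × ℝ) :
    |fderiv ℝ w p v| ≤ Real.sqrt (v.1^2 + v.2^2) * gradNorm w p := by
  have hv : v = v.1 • ((1,0) : ℝ × ℝ) + v.2 • ((0,1) : ℝ × ℝ) := by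
    ext <;> simp
  have : fderiv ℝ w p v = v.1 * fderiv ℝ w p (1,0) + v.2 * fderiv ℝ w p (0,1) := by
    conv_lhs => rw [hv]
    rw [map_add, _root_.map_smul, _root_.map_smul]; simp [smul_eq_mul]
  rw [this]
  exact my_cs _ _ _ _

lemma ftc_seg (w : ℝ × ℝ → ℝ) (hw : ContDiffOn ℝ 1 w sqC) {z v : ℝ × ℝ}
    (hz : z ∈ OmgO) (hzv : z + v ∈ OmgO) :
    |w (z+v) - w z| ≤ Real.sqrt (v.1^2 + v.2^2) * ∫ t in (0:ℝ)..1, gradNorm w (z + t • v) := by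
  set s := Real.sqrt (v.1^2 + v.2^2) with hs
  have hs0 : 0 ≤ s := Real.sqrt_nonneg _
  have hpathc : ContinuousOn (fun t : ℝ => z + t • v) (Icc 0 1) :=
    (continuous_const.add (continuous_id.smul continuous_const)).continuousOn
  have hmem : ∀ t ∈ Icc (0:ℝ) 1, z + t • v ∈ OmgO := fun t ht => path_mem hz hzv ht
  have hderiv : ∀ t ∈ uIcc (0:ℝ) 1,
      HasDerivAt (fun t : ℝ => w (z + t • v)) (fderiv ℝ w (z + t • v) v) t := by
    intro t ht
    rw [uIcc_of_le zero_le_one] at ht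
    have h1 : HasFDerivAt w (fderiv ℝ w (z + t • v)) (z + t • v) :=
      (diff_at w hw (hmem t ht)).hasFDerivAt
    have h2 : HasDerivAt (fun t : ℝ => z + t • v) v t := by
      simpa using ((hasDerivAt_id t).smul_const v).const_add z
    exact h1.comp_hasDerivAt t h2
  have hcontd : ContinuousOn (fun t : ℝ => fderiv ℝ w (z + t • v) v) (Icc 0 1) :=
    (((fderiv_cont w hw).comp hpathc hmem).clm_apply continuousOn_const)
  have hint : IntervalIntegrable (fun t : ℝ => fderiv ℝ w (z + t • v) v) volume 0 1 :=
    hcontd.intervalIntegrable_of_Icc zero_le_one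
  have hgcont : ContinuousOn (fun t : ℝ => gradNorm w (z + t • v)) (Icc 0 1) :=
    (gradNorm_cont w hw).comp hpathc hmem
  have hgint : IntervalIntegrable (fun t : ℝ => gradNorm w (z + t • v)) volume 0 1 :=
    hgcont.intervalIntegrable_of_Icc zero_le_one
  have heq : w (z+v) - w z = ∫ t in (0:ℝ)..1, fderiv ℝ w (z + t • v) v := by
    have := intervalIntegral.integral_eq_sub_of_hasDerivAt hderiv hint
    rw [this]; simp
  rw [heq]
  calc |∫ t in (0:ℝ)..1, fderiv ℝ w (z + t • v) v|
      ≤ ∫ t in (0:ℝ)..1, |fderiv ℝ w (z + t • v) v| := by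
        exact intervalIntegral.abs_integral_le_integral_abs zero_le_one
    _ ≤ ∫ t in (0:ℝ)..1, s * gradNorm w (z + t • v) := by
        apply intervalIntegral.integral_mono_on zero_le_one hint.abs
          (hgint.const_mul s)
        intro t ht
        exact fderiv_apply_bound w hw (hmem t ht) v
    _ = s * ∫ t in (0:ℝ)..1, gradNorm w (z + t • v) := intervalIntegral.integral_const_mul _ _

lemma g_intOn (w : ℝ × ℝ → ℝ) (hw : ContDiffOn ℝ 1 w sqC) :
    IntegrableOn (gradNorm w) OmgO volume := by
  obtain ⟨B, hB0, hB⟩ := gradNorm_bound w hw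
  refine ⟨((gradNorm_cont w hw).aestronglyMeasurable OmgO_meas), ?_⟩
  apply HasFiniteIntegral.restrict_of_bounded (C := B)
    (lt_of_le_of_lt (measure_mono OmgO_sub) sqC_compact.measure_lt_top)
  exact ae_restrict_of_forall_mem OmgO_meas
    (fun x hx => by rw [Real.norm_eq_abs, abs_of_nonneg (gradNorm_nonneg w x)]; exact hB x hx)

lemma per_v (w : ℝ × ℝ → ℝ) (hw : ContDiffOn ℝ 1 w sqC) (v : ℝ × ℝ) :
    ∫⁻ z in OmgO ∩ {z | z + v ∈ OmgO}, ENNReal.ofReal |w (z+v) - w z| ≤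
      ENNReal.ofReal (Real.sqrt (v.1^2+v.2^2) * ∫ z in OmgO, gradNorm w z) := by
  set g := gradNorm w with hg
  set s := Real.sqrt (v.1^2+v.2^2) with hsdef
  have hs0 : 0 ≤ s := Real.sqrt_nonneg _
  set A : Set (ℝ × ℝ) := OmgO ∩ {z | z + v ∈ OmgO} with hA
  have hAmeas : MeasurableSet A :=
    OmgO_meas.inter ((OmgO_open.preimage (continuous_id.add continuous_const)).measurableSet)
  have hAsub : A ⊆ OmgO := inter_subset_left
  -- pointwise step
  have hpt : ∀ z ∈ A, ENNReal.ofReal |w (z+v) - w z| ≤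
      ENNReal.ofReal s * ∫⁻ t in Ioc (0:ℝ) 1, ENNReal.ofReal (g (z + t • v)) := by
    intro z hz
    have h1 := ftc_seg w hw hz.1 hz.2
    have hpath : ∀ t ∈ Icc (0:ℝ) 1, z + t • v ∈ OmgO := fun t ht => path_mem hz.1 hz.2 ht
    have hgc : ContinuousOn (fun t : ℝ => g (z + t • v)) (Icc 0 1) :=
      (gradNorm_cont w hw).comp
        (continuous_const.add (continuous_id.smul continuous_const)).continuousOn hpath
    have hint : IntegrableOn (fun t : ℝ => g (z + t • v)) (Ioc 0 1) volume :=
      (hgc.integrableOn_Icc).mono_set Ioc_subset_Icc_self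
    have h2 : (∫ t in (0:ℝ)..1, g (z + t • v)) = ∫ t in Ioc (0:ℝ) 1, g (z + t • v) :=
      intervalIntegral.integral_of_le zero_le_one
    have h3 : ENNReal.ofReal (∫ t in Ioc (0:ℝ) 1, g (z + t • v)) =
        ∫⁻ t in Ioc (0:ℝ) 1, ENNReal.ofReal (g (z + t • v)) :=
      ofReal_integral_eq_lintegral_ofReal hint
        (ae_of_all _ (fun t => gradNorm_nonneg w _))
    calc ENNReal.ofReal |w (z+v) - w z| ≤ ENNReal.ofReal (s * ∫ t in (0:ℝ)..1, g (z + t • v)) :=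
          ENNReal.ofReal_le_ofReal h1
      _ = ENNReal.ofReal s * ENNReal.ofReal (∫ t in Ioc (0:ℝ) 1, g (z + t • v)) := by
          rw [h2, ENNReal.ofReal_mul hs0]
      _ = _ := by rw [h3]
  -- integrate pointwise bound
  have step1 : ∫⁻ z in A, ENNReal.ofReal |w (z+v) - w z| ≤
      ENNReal.ofReal s * ∫⁻ z in A, ∫⁻ t in Ioc (0:ℝ) 1, ENNReal.ofReal (g (z + t • v)) := by
    rw [← lintegral_const_mul' _ _ ENNReal.ofReal_ne_top]
    exact lintegral_mono_ae (ae_restrict_of_forall_mem hAmeas hpt)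
  -- Tonelli swap
  have hswap : ∫⁻ z in A, ∫⁻ t in Ioc (0:ℝ) 1, ENNReal.ofReal (g (z + t • v)) =
      ∫⁻ t in Ioc (0:ℝ) 1, ∫⁻ z in A, ENNReal.ofReal (g (z + t • v)) := by
    apply lintegral_lintegral_swap
    rw [Measure.prod_restrict]
    apply ContinuousOn.aemeasurable _ (hAmeas.prod measurableSet_Ioc)
    have hc : ContinuousOn (fun p : (ℝ × ℝ) × ℝ => g (p.1 + p.2 • v)) (A ×ˢ Icc 0 1) := by
      apply (gradNorm_cont w hw).comp
      · exact (continuous_fst.add (continuous_snd.smul continuous_const)).continuousOn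
      · rintro ⟨z, t⟩ ⟨hz, ht⟩
        exact path_mem hz.1 hz.2 ht
    exact (ENNReal.continuous_ofReal.comp_continuousOn
      (hc.mono (prod_mono_right Ioc_subset_Icc_self)))
  -- per-t translation bound
  have step2 : ∀ t ∈ Ioc (0:ℝ) 1, ∫⁻ z in A, ENNReal.ofReal (g (z + t • v)) ≤
      ∫⁻ u in OmgO, ENNReal.ofReal (g u) := by
    intro t ht
    have ht' : t ∈ Icc (0:ℝ) 1 := Ioc_subset_Icc_self ht
    set ψ : ℝ × ℝ → ℝ≥0∞ := OmgO.indicator (fun u => ENNReal.ofReal (g u)) with hψ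
    have key : ∀ z : ℝ × ℝ, A.indicator (fun z => ENNReal.ofReal (g (z + t • v))) z ≤
        ψ (z + t • v) := by
      intro z
      by_cases hz : z ∈ A
      · rw [indicator_of_mem hz, hψ, indicator_of_mem (path_mem hz.1 hz.2 ht')]
      · rw [indicator_of_notMem hz]; exact zero_le
    calc ∫⁻ z in A, ENNReal.ofReal (g (z + t • v))
        = ∫⁻ z, A.indicator (fun z => ENNReal.ofReal (g (z + t • v))) z := by
          rw [lintegral_indicator hAmeas]
      _ ≤ ∫⁻ z, ψ (z + t • v) := lintegral_mono key
      _ = ∫⁻ u, ψ u := lintegral_add_right_eq_self ψ (t • v)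
      _ = ∫⁻ u in OmgO, ENNReal.ofReal (g u) := by rw [lintegral_indicator OmgO_meas]
  have step3 : ∫⁻ t in Ioc (0:ℝ) 1, ∫⁻ z in A, ENNReal.ofReal (g (z + t • v)) ≤
      ∫⁻ u in OmgO, ENNReal.ofReal (g u) := by
    calc ∫⁻ t in Ioc (0:ℝ) 1, ∫⁻ z in A, ENNReal.ofReal (g (z + t • v))
        ≤ ∫⁻ _ in Ioc (0:ℝ) 1, ∫⁻ u in OmgO, ENNReal.ofReal (g u) :=
          lintegral_mono_ae (ae_restrict_of_forall_mem measurableSet_Ioc step2)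
      _ = (∫⁻ u in OmgO, ENNReal.ofReal (g u)) * volume (Ioc (0:ℝ) 1) := by
          rw [setLIntegral_const]
      _ = _ := by rw [Real.volume_Ioc]; simp
  have hfin : ∫⁻ u in OmgO, ENNReal.ofReal (g u) = ENNReal.ofReal (∫ u in OmgO, g u) :=
    (ofReal_integral_eq_lintegral_ofReal (g_intOn w hw)
      (ae_of_all _ (fun u => gradNorm_nonneg w u))).symm
  calc ∫⁻ z in A, ENNReal.ofReal |w (z+v) - w z|
      ≤ ENNReal.ofReal s * ∫⁻ z in A, ∫⁻ t in Ioc (0:ℝ) 1, ENNReal.ofReal (g (z + t • v)) :=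
        step1
    _ ≤ ENNReal.ofReal s * ENNReal.ofReal (∫ u in OmgO, g u) := by
        rw [hswap] at *
        exact mul_le_mul_right (le_of_le_of_eq step3 hfin) _
    _ = ENNReal.ofReal (s * ∫ z in OmgO, g z) := (ENNReal.ofReal_mul hs0).symm

lemma contOn_intOn {f : ℝ × ℝ → ℝ} (hf : ContinuousOn f sqC) {s : Set (ℝ × ℝ)}
    (hs : MeasurableSet s) (hsub : s ⊆ sqC) : IntegrableOn f s volume := by
  obtain ⟨M, hM⟩ := sqC_compact.exists_bound_of_continuousOn hf
  refine ⟨(hf.mono hsub).aestronglyMeasurable hs, ?_⟩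
  apply HasFiniteIntegral.restrict_of_bounded (C := M)
    (lt_of_le_of_lt (measure_mono hsub) sqC_compact.measure_lt_top)
  exact ae_restrict_of_forall_mem hs fun x hx => hM x (hsub hx)

lemma oneD_vol (N : ℕ) (hN : 0 < N) (h : ℝ) (e : h = 1/N) (k : ℕ) (hk : k ≤ N) :
    ENNReal.ofReal (h/2) ≤ volume (Icc ((k:ℝ)*h - h/2) ((k:ℝ)*h + h/2) ∩ Ioo 0 1) ∧
      volume (Icc ((k:ℝ)*h - h/2) ((k:ℝ)*h + h/2) ∩ Ioo 0 1) ≤ ENNReal.ofReal h := by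
  have hNR : (0:ℝ) < N := by exact_mod_cast hN
  have h0 : 0 < h := by rw [e]; positivity
  have h1 : h ≤ 1 := by
    rw [e]; rw [div_le_one hNR]; exact_mod_cast hN
  set m : ℝ := (k:ℝ)*h with hm
  have hm0 : 0 ≤ m := by positivity
  have hm1 : m ≤ 1 := by
    rw [hm, e]
    have : (k:ℝ) ≤ N := by exact_mod_cast hk
    rw [mul_one_div, div_le_one hNR]; exact this
  constructor
  · have key : h/2 ≤ min (m+h/2) 1 - max (m-h/2) 0 := by
      rcases le_or_gt (h/2) m with hc | hc
      · have e1 : max (m-h/2) 0 = m - h/2 := max_eq_left (by linarith)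
        have e2 : m ≤ min (m+h/2) 1 := le_min (by linarith) hm1
        rw [e1]; linarith
      · have e1 : max (m-h/2) 0 = 0 := max_eq_right (by linarith)
        have e2 : h/2 ≤ min (m+h/2) 1 := le_min (by linarith) (by linarith)
        rw [e1]; linarith
    have hsub2 : Ioo (max (m-h/2) 0) (min (m+h/2) 1) ⊆ Icc (m - h/2) (m + h/2) ∩ Ioo 0 1 := by
      intro x hx
      obtain ⟨hx1, hx2⟩ := hx
      refine ⟨⟨?_, ?_⟩, ?_, ?_⟩
      · exact le_of_lt (lt_of_le_of_lt (le_max_left _ _) hx1)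
      · exact le_of_lt (lt_of_lt_of_le hx2 (min_le_left _ _))
      · exact lt_of_le_of_lt (le_max_right _ _) hx1
      · exact lt_of_lt_of_le hx2 (min_le_right _ _)
    calc ENNReal.ofReal (h/2) ≤ ENNReal.ofReal (min (m+h/2) 1 - max (m-h/2) 0) :=
          ENNReal.ofReal_le_ofReal key
      _ = volume (Ioo (max (m-h/2) 0) (min (m+h/2) 1)) := (Real.volume_Ioo).symm
      _ ≤ _ := measure_mono hsub2
  · calc volume (Icc (m - h/2) (m + h/2) ∩ Ioo 0 1) ≤ volume (Icc (m - h/2) (m + h/2)) :=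
        measure_mono inter_subset_left
      _ = ENNReal.ofReal h := by rw [Real.volume_Icc]; ring_nf


def Dz (h₁ h₂ : ℝ) (z : ℝ × ℝ) : Set (ℝ × ℝ) :=
  (Icc (z.1 - 2*h₁) (z.1 + 2*h₁) ×ˢ Icc (z.2 - 2*h₂) (z.2 + 2*h₂)) ∩ OmgO

lemma Dz_meas (h₁ h₂ : ℝ) (z : ℝ × ℝ) : MeasurableSet (Dz h₁ h₂ z) :=
  (measurableSet_Icc.prod measurableSet_Icc).inter OmgO_meas

lemma Dz_sub (h₁ h₂ : ℝ) (z : ℝ × ℝ) : Dz h₁ h₂ z ⊆ sqC :=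
  fun y hy => OmgO_sub hy.2

lemma QOmg_vol (N₁ N₂ : ℕ) (hN₁ : 0 < N₁) (hN₂ : 0 < N₂) (h₁ h₂ : ℝ)
    (e₁ : h₁ = 1/N₁) (e₂ : h₂ = 1/N₂) (k l : ℕ) (hk : k ≤ N₁) (hl : l ≤ N₂) :
    ENNReal.ofReal (h₁/2) * ENNReal.ofReal (h₂/2) ≤ volume (QOmg h₁ h₂ k l) ∧
      volume (QOmg h₁ h₂ k l) ≤ ENNReal.ofReal h₁ * ENNReal.ofReal h₂ := by
  have hQ : QOmg h₁ h₂ k l =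
      (Icc ((k:ℝ)*h₁ - h₁/2) ((k:ℝ)*h₁ + h₁/2) ∩ Ioo 0 1) ×ˢ
      (Icc ((l:ℝ)*h₂ - h₂/2) ((l:ℝ)*h₂ + h₂/2) ∩ Ioo 0 1) := by
    rw [QOmg, OmgO, prod_inter_prod]
    norm_num
  have v1 := oneD_vol N₁ hN₁ h₁ e₁ k hk
  have v2 := oneD_vol N₂ hN₂ h₂ e₂ l hl
  rw [hQ, show (volume : Measure (ℝ × ℝ)) = (volume : Measure ℝ).prod volume from rfl,
    Measure.prod_prod]
  exact ⟨mul_le_mul' v1.1 v2.1, mul_le_mul' v1.2 v2.2⟩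

lemma QOmg_sub_Dz (h₁ h₂ : ℝ) (h₁0 : 0 < h₁) (h₂0 : 0 < h₂) (k l : ℕ) {z : ℝ × ℝ}
    (hz1 : |z.1 - (k:ℝ)*h₁| ≤ h₁) (hz2 : |z.2 - (l:ℝ)*h₂| ≤ h₂) :
    QOmg h₁ h₂ k l ⊆ Dz h₁ h₂ z := by
  rintro y ⟨⟨⟨a1, a2⟩, b1, b2⟩, hyΩ⟩
  push_cast at a1 a2 b1 b2
  rw [abs_le] at hz1 hz2
  refine ⟨⟨⟨?_, ?_⟩, ?_, ?_⟩, hyΩ⟩ <;> linarith [hz1.1, hz1.2, hz2.1, hz2.2]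

lemma node_bound (N₁ N₂ : ℕ) (hN₁ : 0 < N₁) (hN₂ : 0 < N₂) (h₁ h₂ : ℝ)
    (e₁ : h₁ = 1/N₁) (e₂ : h₂ = 1/N₂) (w : ℝ × ℝ → ℝ) (hw : ContinuousOn w sqC)
    (k l : ℕ) (hk : k ≤ N₁) (hl : l ≤ N₂) {z : ℝ × ℝ} (hz : z ∈ OmgO)
    (hz1 : |z.1 - (k:ℝ)*h₁| ≤ h₁) (hz2 : |z.2 - (l:ℝ)*h₂| ≤ h₂) :
    |w z - (volume (QOmg h₁ h₂ k l)).toReal⁻¹ * ∫ y in QOmg h₁ h₂ k l, w y| ≤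
      (4/(h₁*h₂)) * ∫ y in Dz h₁ h₂ z, |w z - w y| := by
  have hNR1 : (0:ℝ) < N₁ := by exact_mod_cast hN₁
  have hNR2 : (0:ℝ) < N₂ := by exact_mod_cast hN₂
  have h₁0 : 0 < h₁ := by rw [e₁]; positivity
  have h₂0 : 0 < h₂ := by rw [e₂]; positivity
  set Q := QOmg h₁ h₂ k l with hQdef
  have hQmeas : MeasurableSet Q :=
    (measurableSet_Icc.prod measurableSet_Icc).inter OmgO_meas
  have hQsub : Q ⊆ sqC := fun y hy => OmgO_sub hy.2
  obtain ⟨vlow, vhigh⟩ := QOmg_vol N₁ N₂ hN₁ hN₂ h₁ h₂ e₁ e₂ k l hk hl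
  have hvne : volume Q ≠ ⊤ :=
    ne_top_of_le_ne_top (by finiteness) vhigh
  set μ := (volume Q).toReal with hμdef
  have hμlow : h₁/2 * (h₂/2) ≤ μ := by
    have := ENNReal.toReal_mono hvne vlow
    rwa [← ENNReal.ofReal_mul (by positivity), ENNReal.toReal_ofReal (by positivity)] at this
  have hμpos : 0 < μ := lt_of_lt_of_le (by positivity) hμlow
  have hμinv : μ⁻¹ ≤ 4/(h₁*h₂) := by
    rw [inv_le_comm₀ hμpos (by positivity)]
    calc (4/(h₁*h₂))⁻¹ = h₁/2 * (h₂/2) := by field_simp; ring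
      _ ≤ μ := hμlow
  -- rewrite difference as average of differences
  have hwint : IntegrableOn w Q volume := contOn_intOn hw hQmeas hQsub
  have hdiffint : IntegrableOn (fun y => w z - w y) Q volume :=
    (integrableOn_const hvne).sub hwint
  have havg : w z - μ⁻¹ * ∫ y in Q, w y = μ⁻¹ * ∫ y in Q, (w z - w y) := by
    rw [integral_sub (integrableOn_const (C := w z) hvne) hwint,
      setIntegral_const, smul_eq_mul, mul_sub, ← mul_assoc, measureReal_def, ← hμdef, inv_mul_cancel₀ (ne_of_gt hμpos),
      one_mul]
  rw [havg, abs_mul, abs_of_nonneg (inv_nonneg.2 (le_of_lt hμpos))]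
  have habsint : IntegrableOn (fun y => |w z - w y|) (Dz h₁ h₂ z) volume := by
    apply contOn_intOn _ (Dz_meas h₁ h₂ z) (Dz_sub h₁ h₂ z)
    exact (continuous_abs.comp_continuousOn (continuousOn_const.sub hw))
  have hstep : |∫ y in Q, (w z - w y)| ≤ ∫ y in Dz h₁ h₂ z, |w z - w y| := by
    calc |∫ y in Q, (w z - w y)| ≤ ∫ y in Q, |w z - w y| := by
          simpa [Real.norm_eq_abs] using norm_integral_le_integral_norm (μ := volume.restrict Q)
            (fun y => w z - w y)
      _ ≤ ∫ y in Dz h₁ h₂ z, |w z - w y| := by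
          apply setIntegral_mono_set habsint
            (ae_of_all _ (fun y => abs_nonneg _))
          exact HasSubset.Subset.eventuallyLE (QOmg_sub_Dz h₁ h₂ h₁0 h₂0 k l hz1 hz2)
  calc μ⁻¹ * |∫ y in Q, (w z - w y)| ≤ μ⁻¹ * ∫ y in Dz h₁ h₂ z, |w z - w y| := by
        apply mul_le_mul_of_nonneg_left hstep (inv_nonneg.2 (le_of_lt hμpos))
    _ ≤ (4/(h₁*h₂)) * ∫ y in Dz h₁ h₂ z, |w z - w y| := by
        apply mul_le_mul_of_nonneg_right hμinv
        exact setIntegral_nonneg (Dz_meas h₁ h₂ z) (fun y _ => abs_nonneg _)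


lemma loc1D (N : ℕ) (hN : 0 < N) (h : ℝ) (e : h = 1/N) {x : ℝ} (hx : x ∈ Ioo (0:ℝ) 1) :
    ∃ k : ℕ, k + 1 ≤ N ∧ (k:ℝ)*h ≤ x ∧ x ≤ ((k:ℝ)+1)*h := by
  have hNR : (0:ℝ) < N := by exact_mod_cast hN
  have h0 : 0 < h := by rw [e]; positivity
  obtain ⟨hx0, hx1⟩ := hx
  have hxN : 0 ≤ x * N := by positivity
  set j : ℕ := ⌊x * N⌋.toNat with hj
  have hje : ((j:ℤ):ℝ) = ((⌊x * N⌋ : ℤ) : ℝ) := by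
    rw [hj]; norm_cast; exact Int.toNat_of_nonneg (Int.floor_nonneg.2 hxN)
  have hjle : (j:ℝ) ≤ x * N := by
    rw [show ((j:ℝ)) = ((j:ℤ):ℝ) from by norm_cast, hje]; exact Int.floor_le _
  have hjgt : x * N < (j:ℝ) + 1 := by
    rw [show ((j:ℝ)) = ((j:ℤ):ℝ) from by norm_cast, hje]; exact Int.lt_floor_add_one _
  have hjN : j + 1 ≤ N := by
    by_contra hcon
    push_neg at hcon
    have : (N:ℝ) ≤ (j:ℝ) := by exact_mod_cast Nat.le_of_lt_succ (by omega)
    have : (N:ℝ) ≤ x * N := le_trans this hjle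
    nlinarith
  refine ⟨j, hjN, ?_, ?_⟩
  · rw [e]
    rw [mul_one_div, div_le_iff₀ hNR]
    linarith
  · rw [e, mul_one_div, le_div_iff₀ hNR]
    linarith

lemma unit_mul {p q : ℝ} (hp0 : 0 ≤ p) (hp1 : p ≤ 1) (hq0 : 0 ≤ q) (hq1 : q ≤ 1) :
    0 ≤ p*q ∧ p*q ≤ 1 :=
  ⟨mul_nonneg hp0 hq0, le_trans (mul_le_of_le_one_right hp0 hq1) hp1⟩

set_option maxHeartbeats 1000000 in
lemma stepA (N₁ N₂ : ℕ) (hN₁ : 0 < N₁) (hN₂ : 0 < N₂) (h₁ h₂ : ℝ)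
    (e₁ : h₁ = 1/N₁) (e₂ : h₂ = 1/N₂) (w Ch : ℝ × ℝ → ℝ) (hw : ContinuousOn w sqC)
    (hCh : IsCInterp N₁ N₂ h₁ h₂ w Ch) {z : ℝ × ℝ} (hz : z ∈ OmgO) :
    |w z - Ch z| ≤ (16/(h₁*h₂)) * ∫ y in Dz h₁ h₂ z, |w z - w y| := by
  have h₁0 : 0 < h₁ := by rw [e₁]; positivity
  have h₂0 : 0 < h₂ := by rw [e₂]; positivity
  obtain ⟨k, hk, hkx, hkx'⟩ := loc1D N₁ hN₁ h₁ e₁ hz.1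
  obtain ⟨l, hl, hly, hly'⟩ := loc1D N₂ hN₂ h₂ e₂ hz.2
  obtain ⟨a, b, c, d, hbil⟩ := hCh.2.1 k l (by omega) (by omega)
  have hx1e : ((k:ℝ)+1)*h₁ = (k:ℝ)*h₁ + h₁ := by ring
  have hy1e : ((l:ℝ)+1)*h₂ = (l:ℝ)*h₂ + h₂ := by ring
  set x₀ := (k:ℝ)*h₁ with hx₀
  set y₀ := (l:ℝ)*h₂ with hy₀
  set s := (z.1 - x₀)/h₁ with hs
  set t := (z.2 - y₀)/h₂ with ht
  have hs0 : 0 ≤ s := by apply div_nonneg _ (le_of_lt h₁0); linarith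
  have hs1 : s ≤ 1 := by rw [div_le_one h₁0]; linarith
  have ht0 : 0 ≤ t := by apply div_nonneg _ (le_of_lt h₂0); linarith
  have ht1 : t ≤ 1 := by rw [div_le_one h₂0]; linarith
  have memcell : ∀ p₁ p₂ : ℝ, x₀ ≤ p₁ → p₁ ≤ x₀ + h₁ → y₀ ≤ p₂ → p₂ ≤ y₀ + h₂ →
      ((p₁, p₂) : ℝ × ℝ) ∈ cell h₁ h₂ k l := by
    intro p₁ p₂ m1 m2 m3 m4
    refine ⟨⟨?_, ?_⟩, ?_, ?_⟩ <;> dsimp only <;> push_cast <;>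
      [skip; rw [add_mul, one_mul]; skip; rw [add_mul, one_mul]] <;> linarith
  have hzc : z ∈ cell h₁ h₂ k l := memcell z.1 z.2 hkx (by linarith) hly (by linarith)
  have m00 : ((x₀, y₀) : ℝ × ℝ) ∈ cell h₁ h₂ k l := memcell _ _ le_rfl (by linarith) le_rfl (by linarith)
  have m10 : ((x₀ + h₁, y₀) : ℝ × ℝ) ∈ cell h₁ h₂ k l := memcell _ _ (by linarith) le_rfl le_rfl (by linarith)
  have m01 : ((x₀, y₀ + h₂) : ℝ × ℝ) ∈ cell h₁ h₂ k l := memcell _ _ le_rfl (by linarith) (by linarith) le_rfl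
  have m11 : ((x₀ + h₁, y₀ + h₂) : ℝ × ℝ) ∈ cell h₁ h₂ k l := memcell _ _ (by linarith) le_rfl (by linarith) le_rfl
  have key : Ch z = (1-s)*(1-t)*Ch (x₀, y₀) + s*(1-t)*Ch (x₀+h₁, y₀) +
      (1-s)*t*Ch (x₀, y₀+h₂) + s*t*Ch (x₀+h₁, y₀+h₂) := by
    have zx : z.1 = x₀ + s*h₁ := by
      rw [hs, div_mul_cancel₀ _ (ne_of_gt h₁0)]; ring
    have zy : z.2 = y₀ + t*h₂ := by
      rw [ht, div_mul_cancel₀ _ (ne_of_gt h₂0)]; ring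
    rw [hbil z hzc, hbil _ m00, hbil _ m10, hbil _ m01, hbil _ m11]
    simp only []
    rw [zx, zy]
    ring
  have hdiff : w z - Ch z = (1-s)*(1-t)*(w z - Ch (x₀, y₀)) + s*(1-t)*(w z - Ch (x₀+h₁, y₀)) +
      (1-s)*t*(w z - Ch (x₀, y₀+h₂)) + s*t*(w z - Ch (x₀+h₁, y₀+h₂)) := by
    rw [key]; ring
  -- node values as averages
  have n00 : Ch (x₀, y₀) = (volume (QOmg h₁ h₂ k l)).toReal⁻¹ * ∫ y in QOmg h₁ h₂ k l, w y := by
    exact hCh.2.2 k l (by omega) (by omega)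
  have n10 : Ch (x₀+h₁, y₀) =
      (volume (QOmg h₁ h₂ (k+1) l)).toReal⁻¹ * ∫ y in QOmg h₁ h₂ (k+1 : ℕ) l, w y := by
    have e10 : ((x₀+h₁, y₀) : ℝ × ℝ) = (((k+1 : ℕ):ℝ)*h₁, ((l:ℕ):ℝ)*h₂) := by
      simp only [Prod.mk.injEq]; constructor <;> push_cast <;> ring
    rw [e10]
    exact_mod_cast hCh.2.2 (k+1) l (by omega) (by omega)
  have n01 : Ch (x₀, y₀+h₂) =
      (volume (QOmg h₁ h₂ k (l+1))).toReal⁻¹ * ∫ y in QOmg h₁ h₂ k (l+1 : ℕ), w y := by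
    have e01 : ((x₀, y₀+h₂) : ℝ × ℝ) = (((k : ℕ):ℝ)*h₁, ((l+1:ℕ):ℝ)*h₂) := by
      simp only [Prod.mk.injEq]; constructor <;> push_cast <;> ring
    rw [e01]
    exact_mod_cast hCh.2.2 k (l+1) (by omega) (by omega)
  have n11 : Ch (x₀+h₁, y₀+h₂) =
      (volume (QOmg h₁ h₂ (k+1) (l+1))).toReal⁻¹ * ∫ y in QOmg h₁ h₂ (k+1 : ℕ) (l+1 : ℕ), w y := by
    have e11 : ((x₀+h₁, y₀+h₂) : ℝ × ℝ) = (((k+1 : ℕ):ℝ)*h₁, ((l+1:ℕ):ℝ)*h₂) := by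
      simp only [Prod.mk.injEq]; constructor <;> push_cast <;> ring
    rw [e11]
    exact_mod_cast hCh.2.2 (k+1) (l+1) (by omega) (by omega)
  -- node bounds
  set D := ∫ y in Dz h₁ h₂ z, |w z - w y| with hD
  have habs1 : |z.1 - ((k:ℕ):ℝ)*h₁| ≤ h₁ := abs_le.2 ⟨by push_cast; linarith, by push_cast; linarith⟩
  have habs1' : |z.1 - ((k+1:ℕ):ℝ)*h₁| ≤ h₁ := abs_le.2 ⟨by push_cast; linarith, by push_cast; linarith⟩
  have habs2 : |z.2 - ((l:ℕ):ℝ)*h₂| ≤ h₂ := abs_le.2 ⟨by push_cast; linarith, by push_cast; linarith⟩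
  have habs2' : |z.2 - ((l+1:ℕ):ℝ)*h₂| ≤ h₂ := abs_le.2 ⟨by push_cast; linarith, by push_cast; linarith⟩
  have B00 : |w z - Ch (x₀, y₀)| ≤ (4/(h₁*h₂)) * D := by
    rw [n00]; exact node_bound N₁ N₂ hN₁ hN₂ h₁ h₂ e₁ e₂ w hw k l (by omega) (by omega) hz habs1 habs2
  have B10 : |w z - Ch (x₀+h₁, y₀)| ≤ (4/(h₁*h₂)) * D := by
    rw [n10]; exact node_bound N₁ N₂ hN₁ hN₂ h₁ h₂ e₁ e₂ w hw (k+1) l (by omega) (by omega) hz habs1' habs2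
  have B01 : |w z - Ch (x₀, y₀+h₂)| ≤ (4/(h₁*h₂)) * D := by
    rw [n01]; exact node_bound N₁ N₂ hN₁ hN₂ h₁ h₂ e₁ e₂ w hw k (l+1) (by omega) (by omega) hz habs1 habs2'
  have B11 : |w z - Ch (x₀+h₁, y₀+h₂)| ≤ (4/(h₁*h₂)) * D := by
    rw [n11]; exact node_bound N₁ N₂ hN₁ hN₂ h₁ h₂ e₁ e₂ w hw (k+1) (l+1) (by omega) (by omega) hz habs1' habs2'
  have coef : ∀ (lam : ℝ) (u : ℝ), 0 ≤ lam → lam ≤ 1 → |lam * u| ≤ |u| := by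
    intro lam u hl0 hl1
    rw [abs_mul, abs_of_nonneg hl0]
    exact mul_le_of_le_one_left (abs_nonneg _) hl1
  have final : |w z - Ch z| ≤ |w z - Ch (x₀, y₀)| + |w z - Ch (x₀+h₁, y₀)| +
      |w z - Ch (x₀, y₀+h₂)| + |w z - Ch (x₀+h₁, y₀+h₂)| := by
    rw [hdiff]
    have u1 := unit_mul (by linarith : (0:ℝ) ≤ 1-s) (by linarith : (1:ℝ)-s ≤ 1) (by linarith : (0:ℝ) ≤ 1-t) (by linarith : (1:ℝ)-t ≤ 1)
    have u2 := unit_mul hs0 hs1 (by linarith : (0:ℝ) ≤ 1-t) (by linarith : (1:ℝ)-t ≤ 1)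
    have u3 := unit_mul (by linarith : (0:ℝ) ≤ 1-s) (by linarith : (1:ℝ)-s ≤ 1) ht0 ht1
    have u4 := unit_mul hs0 hs1 ht0 ht1
    have t1 := coef ((1-s)*(1-t)) (w z - Ch (x₀, y₀)) u1.1 u1.2
    have t2 := coef (s*(1-t)) (w z - Ch (x₀+h₁, y₀)) u2.1 u2.2
    have t3 := coef ((1-s)*t) (w z - Ch (x₀, y₀+h₂)) u3.1 u3.2
    have t4 := coef (s*t) (w z - Ch (x₀+h₁, y₀+h₂)) u4.1 u4.2
    calc |(1-s)*(1-t)*(w z - Ch (x₀, y₀)) + s*(1-t)*(w z - Ch (x₀+h₁, y₀)) +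
        (1-s)*t*(w z - Ch (x₀, y₀+h₂)) + s*t*(w z - Ch (x₀+h₁, y₀+h₂))|
        ≤ |(1-s)*(1-t)*(w z - Ch (x₀, y₀)) + s*(1-t)*(w z - Ch (x₀+h₁, y₀)) +
          (1-s)*t*(w z - Ch (x₀, y₀+h₂))| + |s*t*(w z - Ch (x₀+h₁, y₀+h₂))| := abs_add_le _ _
      _ ≤ |(1-s)*(1-t)*(w z - Ch (x₀, y₀)) + s*(1-t)*(w z - Ch (x₀+h₁, y₀))| +
          |(1-s)*t*(w z - Ch (x₀, y₀+h₂))| + |s*t*(w z - Ch (x₀+h₁, y₀+h₂))| := by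
          gcongr; exact abs_add_le _ _
      _ ≤ |(1-s)*(1-t)*(w z - Ch (x₀, y₀))| + |s*(1-t)*(w z - Ch (x₀+h₁, y₀))| +
          |(1-s)*t*(w z - Ch (x₀, y₀+h₂))| + |s*t*(w z - Ch (x₀+h₁, y₀+h₂))| := by
          gcongr; exact abs_add_le _ _
      _ ≤ _ := add_le_add (add_le_add (add_le_add t1 t2) t3) t4
  calc |w z - Ch z| ≤ |w z - Ch (x₀, y₀)| + |w z - Ch (x₀+h₁, y₀)| +
      |w z - Ch (x₀, y₀+h₂)| + |w z - Ch (x₀+h₁, y₀+h₂)| := final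
    _ ≤ (4/(h₁*h₂)) * D + (4/(h₁*h₂)) * D + (4/(h₁*h₂)) * D + (4/(h₁*h₂)) * D := by
        exact add_le_add (add_le_add (add_le_add B00 B10) B01) B11
    _ = (16/(h₁*h₂)) * D := by ring

/-- first-order L¹ approximation estimate for `𝒞_h`. -/
theorem stmt14 :
    ∃ c : ℝ, 0 < c ∧
      ∀ (N₁ N₂ : ℕ), 0 < N₁ → 0 < N₂ → ∀ h₁ h₂ : ℝ, h₁ = 1 / N₁ → h₂ = 1 / N₂ →
        ∀ w : ℝ × ℝ → ℝ, ContDiffOn ℝ 1 w sqC →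
          ∀ Ch : ℝ × ℝ → ℝ, IsCInterp N₁ N₂ h₁ h₂ w Ch →
            (∫ z in OmgO, |w z - Ch z|) ≤ c * max h₁ h₂ * ∫ z in OmgO, gradNorm w z := by
  refine ⟨1024, by norm_num, ?_⟩
  intro N₁ N₂ hN₁ hN₂ h₁ h₂ e₁ e₂ w hw Ch hCh
  have hNR1 : (0:ℝ) < N₁ := by exact_mod_cast hN₁
  have hNR2 : (0:ℝ) < N₂ := by exact_mod_cast hN₂
  have h₁0 : 0 < h₁ := by rw [e₁]; positivity
  have h₂0 : 0 < h₂ := by rw [e₂]; positivity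
  set h : ℝ := max h₁ h₂ with hh
  have h0 : 0 < h := lt_of_lt_of_le h₁0 (le_max_left _ _)
  have hwc : ContinuousOn w sqC := hw.continuousOn
  set Ig : ℝ := ∫ z in OmgO, gradNorm w z with hIg
  have hIg0 : 0 ≤ Ig := setIntegral_nonneg OmgO_meas (fun z _ => gradNorm_nonneg w z)
  set Rv : Set (ℝ × ℝ) := Icc (-(2*h₁)) (2*h₁) ×ˢ Icc (-(2*h₂)) (2*h₂) with hRv
  have hRvmeas : MeasurableSet Rv := measurableSet_Icc.prod measurableSet_Icc
  have hRvvol : volume Rv = ENNReal.ofReal (4*h₁) * ENNReal.ofReal (4*h₂) := by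
    rw [hRv, show (volume : Measure (ℝ × ℝ)) = (volume : Measure ℝ).prod volume from rfl,
      Measure.prod_prod, Real.volume_Icc, Real.volume_Icc]
    ring_nf
  -- integrability of |w - Ch| on OmgO
  have hdiffc : ContinuousOn (fun z => |w z - Ch z|) sqC :=
    continuous_abs.comp_continuousOn (hwc.sub hCh.1)
  have hint : IntegrableOn (fun z => |w z - Ch z|) OmgO volume :=
    contOn_intOn hdiffc OmgO_meas OmgO_sub
  have habsint : ∀ z : ℝ × ℝ, IntegrableOn (fun y => |w z - w y|) (Dz h₁ h₂ z) volume :=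
    fun z => contOn_intOn (continuous_abs.comp_continuousOn (continuousOn_const.sub hwc))
      (Dz_meas h₁ h₂ z) (Dz_sub h₁ h₂ z)
  -- Step 1 : pointwise in lintegral form
  have step1 : ∫⁻ z in OmgO, ENNReal.ofReal |w z - Ch z| ≤
      ENNReal.ofReal (16/(h₁*h₂)) *
        ∫⁻ z in OmgO, ∫⁻ y in Dz h₁ h₂ z, ENNReal.ofReal |w z - w y| := by
    rw [← lintegral_const_mul' _ _ ENNReal.ofReal_ne_top]
    apply lintegral_mono_ae
    apply ae_restrict_of_forall_mem OmgO_meas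
    intro z hz
    calc ENNReal.ofReal |w z - Ch z|
        ≤ ENNReal.ofReal ((16/(h₁*h₂)) * ∫ y in Dz h₁ h₂ z, |w z - w y|) :=
          ENNReal.ofReal_le_ofReal (stepA N₁ N₂ hN₁ hN₂ h₁ h₂ e₁ e₂ w Ch hwc hCh hz)
      _ = ENNReal.ofReal (16/(h₁*h₂)) * ENNReal.ofReal (∫ y in Dz h₁ h₂ z, |w z - w y|) :=
          ENNReal.ofReal_mul (by positivity)
      _ ≤ ENNReal.ofReal (16/(h₁*h₂)) * ∫⁻ y in Dz h₁ h₂ z, ENNReal.ofReal |w z - w y| := by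
          apply mul_le_mul_right
          rw [ofReal_integral_eq_lintegral_ofReal (habsint z)
            (ae_of_all _ (fun y => abs_nonneg _))]
  -- Step 2 : inner change of variable y = z + v
  have inner_eq : ∀ z : ℝ × ℝ, (∫⁻ y in Dz h₁ h₂ z, ENNReal.ofReal |w z - w y|) =
      ∫⁻ v in Rv, {p : ℝ × ℝ | z + p ∈ OmgO}.indicator
        (fun v => ENNReal.ofReal |w z - w (z+v)|) v := by
    intro z
    have hDz : ∀ v : ℝ × ℝ, Rv.indicator ({p : ℝ × ℝ | z + p ∈ OmgO}.indicator
        (fun v => ENNReal.ofReal |w z - w (z+v)|)) v =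
        (Dz h₁ h₂ z).indicator (fun y => ENNReal.ofReal |w z - w y|) (z + v) := by
      intro v
      have hmem : z + v ∈ Dz h₁ h₂ z ↔ v ∈ Rv ∧ z + v ∈ OmgO := by
        constructor
        · rintro ⟨⟨⟨a1, a2⟩, b1, b2⟩, hΩ⟩
          simp only [Prod.fst_add, Prod.snd_add] at a1 a2 b1 b2
          exact ⟨⟨⟨by linarith, by linarith⟩, by linarith, by linarith⟩, hΩ⟩
        · rintro ⟨⟨⟨a1, a2⟩, b1, b2⟩, hΩ⟩
          refine ⟨⟨⟨?_, ?_⟩, ?_, ?_⟩, hΩ⟩ <;> simp only [Prod.fst_add, Prod.snd_add] <;> linarith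
      by_cases hv : v ∈ Rv
      · by_cases hΩ : z + v ∈ OmgO
        · rw [indicator_of_mem hv, indicator_of_mem (show v ∈ {p : ℝ×ℝ | z + p ∈ OmgO} from hΩ),
            indicator_of_mem (hmem.2 ⟨hv, hΩ⟩)]
        · rw [indicator_of_mem hv, indicator_of_notMem (show v ∉ {p : ℝ×ℝ | z + p ∈ OmgO} from hΩ),
            indicator_of_notMem (fun hc => hΩ (hmem.1 hc).2)]
      · rw [indicator_of_notMem hv, indicator_of_notMem (fun hc => hv (hmem.1 hc).1)]
    calc ∫⁻ y in Dz h₁ h₂ z, ENNReal.ofReal |w z - w y|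
        = ∫⁻ y, (Dz h₁ h₂ z).indicator (fun y => ENNReal.ofReal |w z - w y|) y := by
          rw [lintegral_indicator (Dz_meas h₁ h₂ z)]
      _ = ∫⁻ v, (Dz h₁ h₂ z).indicator (fun y => ENNReal.ofReal |w z - w y|) (v + z) := by
          rw [lintegral_add_right_eq_self
            ((Dz h₁ h₂ z).indicator (fun y => ENNReal.ofReal |w z - w y|)) z]
      _ = ∫⁻ v, Rv.indicator ({p : ℝ × ℝ | z + p ∈ OmgO}.indicator
            (fun v => ENNReal.ofReal |w z - w (z+v)|)) v := by
          apply lintegral_congr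
          intro v
          rw [hDz v, add_comm]
      _ = _ := by rw [lintegral_indicator hRvmeas]
  set F : ℝ × ℝ → ℝ × ℝ → ℝ≥0∞ := fun z v => {p : ℝ × ℝ | z + p ∈ OmgO}.indicator
    (fun v => ENNReal.ofReal |w z - w (z+v)|) v with hF
  -- Tonelli swap
  have hswap : ∫⁻ z in OmgO, ∫⁻ v in Rv, F z v = ∫⁻ v in Rv, ∫⁻ z in OmgO, F z v := by
    apply lintegral_lintegral_swap
    have hTopen : IsOpen {p : (ℝ × ℝ) × (ℝ × ℝ) | p.1 + p.2 ∈ OmgO} :=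
      OmgO_open.preimage (continuous_fst.add continuous_snd)
    have huncurry : Function.uncurry F = fun p : (ℝ × ℝ) × (ℝ × ℝ) =>
        ({p : (ℝ × ℝ) × (ℝ × ℝ) | p.1 + p.2 ∈ OmgO}).indicator
          (fun p => ENNReal.ofReal |w p.1 - w (p.1 + p.2)|) p := by
      funext p
      by_cases hp : p.1 + p.2 ∈ OmgO
      · simp [Function.uncurry, hF, indicator, hp]
      · simp [Function.uncurry, hF, indicator, hp]
    rw [huncurry, aemeasurable_indicator_iff hTopen.measurableSet]
    rw [Measure.prod_restrict, Measure.restrict_restrict hTopen.measurableSet]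
    apply ContinuousOn.aemeasurable _ (hTopen.measurableSet.inter (OmgO_meas.prod hRvmeas))
    have hg1 : ContinuousOn (fun p : (ℝ × ℝ) × (ℝ × ℝ) => w p.1)
        ({p : (ℝ×ℝ)×(ℝ×ℝ) | p.1 + p.2 ∈ OmgO} ∩ OmgO ×ˢ Rv) :=
      hwc.comp continuous_fst.continuousOn (fun p hp => OmgO_sub hp.2.1)
    have hg2 : ContinuousOn (fun p : (ℝ × ℝ) × (ℝ × ℝ) => w (p.1 + p.2))
        ({p : (ℝ×ℝ)×(ℝ×ℝ) | p.1 + p.2 ∈ OmgO} ∩ OmgO ×ˢ Rv) :=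
      hwc.comp (continuous_fst.add continuous_snd).continuousOn (fun p hp => OmgO_sub hp.1)
    exact ENNReal.continuous_ofReal.comp_continuousOn ((hg1.sub hg2).abs)
  -- per-v bound
  have perv2 : ∀ v ∈ Rv, (∫⁻ z in OmgO, F z v) ≤ ENNReal.ofReal (4*h*Ig) := by
    intro v hv
    have hB : MeasurableSet {z : ℝ × ℝ | z + v ∈ OmgO} :=
      (OmgO_open.preimage (continuous_id.add continuous_const)).measurableSet
    have hFz : (fun z => F z v) = {z : ℝ × ℝ | z + v ∈ OmgO}.indicator
        (fun z => ENNReal.ofReal |w z - w (z+v)|) := by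
      funext z
      by_cases hz : z + v ∈ OmgO
      · simp [hF, indicator, hz]
      · simp [hF, indicator, hz]
    have e1 : (∫⁻ z in OmgO, F z v) =
        ∫⁻ z in OmgO ∩ {z : ℝ × ℝ | z + v ∈ OmgO}, ENNReal.ofReal |w z - w (z+v)| := by
      rw [hFz, lintegral_indicator hB, Measure.restrict_restrict hB, inter_comm]
    have e2 : ∀ z : ℝ × ℝ, ENNReal.ofReal |w z - w (z+v)| = ENNReal.ofReal |w (z+v) - w z| := by
      intro z; rw [abs_sub_comm]
    have hsv : Real.sqrt (v.1^2 + v.2^2) ≤ 4*h := by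
      have h1 : |v.1| ≤ 2*h₁ := abs_le.2 ⟨hv.1.1, hv.1.2⟩
      have h2 : |v.2| ≤ 2*h₂ := abs_le.2 ⟨hv.2.1, hv.2.2⟩
      have hm1 : h₁ ≤ h := le_max_left _ _
      have hm2 : h₂ ≤ h := le_max_right _ _
      calc Real.sqrt (v.1^2 + v.2^2) ≤ |v.1| + |v.2| := my_sqrt_le _ _
        _ ≤ 4*h := by linarith
    calc (∫⁻ z in OmgO, F z v)
        = ∫⁻ z in OmgO ∩ {z : ℝ × ℝ | z + v ∈ OmgO}, ENNReal.ofReal |w (z+v) - w z| := by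
          rw [e1]; exact lintegral_congr (fun z => e2 z)
      _ ≤ ENNReal.ofReal (Real.sqrt (v.1^2+v.2^2) * Ig) := per_v w hw v
      _ ≤ ENNReal.ofReal (4*h*Ig) :=
          ENNReal.ofReal_le_ofReal (mul_le_mul_of_nonneg_right hsv hIg0)
  -- combine
  have main : (∫⁻ z in OmgO, ENNReal.ofReal |w z - Ch z|) ≤ ENNReal.ofReal (1024 * h * Ig) := by
    calc (∫⁻ z in OmgO, ENNReal.ofReal |w z - Ch z|)
        ≤ ENNReal.ofReal (16/(h₁*h₂)) *
          ∫⁻ z in OmgO, ∫⁻ y in Dz h₁ h₂ z, ENNReal.ofReal |w z - w y| := step1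
      _ = ENNReal.ofReal (16/(h₁*h₂)) * ∫⁻ v in Rv, ∫⁻ z in OmgO, F z v := by
          rw [lintegral_congr (fun z => inner_eq z), hswap]
      _ ≤ ENNReal.ofReal (16/(h₁*h₂)) * (ENNReal.ofReal (4*h*Ig) * volume Rv) := by
          apply mul_le_mul_right
          calc ∫⁻ v in Rv, ∫⁻ z in OmgO, F z v
              ≤ ∫⁻ _ in Rv, ENNReal.ofReal (4*h*Ig) :=
                lintegral_mono_ae (ae_restrict_of_forall_mem hRvmeas perv2)
            _ = ENNReal.ofReal (4*h*Ig) * volume Rv := setLIntegral_const _ _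
      _ = ENNReal.ofReal (16/(h₁*h₂)) * ENNReal.ofReal ((4*h*Ig) * (4*h₁) * (4*h₂)) := by
          rw [hRvvol, ← ENNReal.ofReal_mul (by positivity), ← ENNReal.ofReal_mul (by positivity)]
          ring_nf
      _ = ENNReal.ofReal ((16/(h₁*h₂)) * ((4*h*Ig) * (4*h₁) * (4*h₂))) :=
          (ENNReal.ofReal_mul (by positivity)).symm
      _ = ENNReal.ofReal (1024 * h * Ig) := by
          congr 1
          field_simp
          ring
  have lhs_eq : (∫ z in OmgO, |w z - Ch z|) =
      (∫⁻ z in OmgO, ENNReal.ofReal |w z - Ch z|).toReal := by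
    rw [← ofReal_integral_eq_lintegral_ofReal hint (ae_of_all _ (fun z => abs_nonneg _)),
      ENNReal.toReal_ofReal (setIntegral_nonneg OmgO_meas (fun z _ => abs_nonneg _))]
  rw [lhs_eq]
  calc (∫⁻ z in OmgO, ENNReal.ofReal |w z - Ch z|).toReal
      ≤ (ENNReal.ofReal (1024 * h * Ig)).toReal :=
        ENNReal.toReal_mono ENNReal.ofReal_ne_top main
    _ = 1024 * h * Ig := ENNReal.toReal_ofReal (by positivity)
    _ ≤ 1024 * h * Ig := le_rfl
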